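/- Let H be a d-uniform hypergraph with Lagrangian λ(H). Then for every n, the maximum over n-variable weightings of the Lagrangian polynomial with weights in (1/n)·ℤ≥0 summing to 1, multiplied by n^d, is at most λ(H)·n^d; and there exists a random construction achieving expected value d!·λ(H)·C(n,d) shattered sub-configurations. Concretely: d!·λ(H(k,d))·C(n,d) ≤ f(n,k,d) ≤ λ(H(k,d))·n^d for all n ≥ d ≥ 1 and k ≥ 2^d. -/

import Mathlib

open Finset

/-- A choice `s` of columns of the binary matrix `M` forms a shattered submatrix if
every pattern of values on the columns in `s` appears in some row. -/
def ColsShattered {k n : ℕ} (M : Fin k → Fin n → Bool) (s : Finset (Fin n)) : Prop :=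
  ∀ g : Fin n → Bool, ∃ i : Fin k, ∀ j ∈ s, M i j = g j

open Classical in
/-- The number of shattered `k × d` submatrices of `M`. -/
noncomputable def shatteredCount {k n : ℕ} (d : ℕ) (M : Fin k → Fin n → Bool) : ℕ :=
  ((Finset.univ.powersetCard d).filter (fun s => ColsShattered M s)).card

open Classical in
/-- `fMat n k d` : the maximum number of shattered `k × d` submatrices of a
binary `k × n` matrix. -/
noncomputable def fMat (n k d : ℕ) : ℕ :=
  (Finset.univ : Finset (Fin k → Fin n → Bool)).sup (fun M => shatteredCount d M)

/-- A set `e` of `d` binary vectors of length `k` is an edge of `H(k,d)` iff the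
`k × d` matrix with these vectors as columns is shattered. -/
def IsEdgeH (k d : ℕ) (e : Finset (Fin k → Bool)) : Prop :=
  e.card = d ∧ ∀ g : (Fin k → Bool) → Bool, ∃ i : Fin k, ∀ v ∈ e, v i = g v

open Classical in
/-- The Lagrangian polynomial of `H(k,d)` evaluated at the weighting `x`. -/
noncomputable def lagPoly (k d : ℕ) (x : (Fin k → Bool) → ℝ) : ℝ :=
  ∑ e ∈ (Finset.univ.powersetCard d).filter (fun e => IsEdgeH k d e), ∏ v ∈ e, x v

/-- The Lagrangian of `H(k,d)` : the supremum of the Lagrangian polynomial over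
the probability simplex. -/
noncomputable def lagH (k d : ℕ) : ℝ :=
  sSup {y : ℝ | ∃ x : (Fin k → Bool) → ℝ,
    (∀ v, 0 ≤ x v) ∧ (∑ v, x v = 1) ∧ lagPoly k d x = y}

section Aux

private def Mc {k n : ℕ} (c : Fin n → (Fin k → Bool)) : Fin k → Fin n → Bool := fun i j => c j i

private lemma shat_iff {k n d : ℕ} (c : Fin n → (Fin k → Bool)) {s : Finset (Fin n)}
    (hs : s.card = d) :
    ColsShattered (Mc c) s ↔ Set.InjOn c ↑s ∧ IsEdgeH k d (s.image c) := by
  constructor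
  · intro h
    have hinj : Set.InjOn c ↑s := by
      intro j1 h1 j2 h2 heq
      by_contra hne
      obtain ⟨i, hi⟩ := h (fun j => decide (j = j1))
      have e1 := hi j1 (Finset.mem_coe.mp h1)
      have e2 := hi j2 (Finset.mem_coe.mp h2)
      simp only [Mc] at e1 e2
      rw [heq] at e1
      rw [e1] at e2
      simp at e2
      exact hne e2.symm
    refine ⟨hinj, ?_, ?_⟩
    · rw [Finset.card_image_of_injOn hinj, hs]
    · intro g
      obtain ⟨i, hi⟩ := h (fun j => g (c j))
      refine ⟨i, fun v hv => ?_⟩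
      obtain ⟨j, hj, rfl⟩ := Finset.mem_image.mp hv
      exact hi j hj
  · rintro ⟨hinj, _, hedge⟩
    intro g
    obtain ⟨i, hi⟩ := hedge (fun v => if h : ∃ j ∈ s, c j = v then g h.choose else false)
    refine ⟨i, fun j hj => ?_⟩
    have hmem : c j ∈ s.image c := Finset.mem_image_of_mem c hj
    have h2 := hi (c j) hmem
    have hex : ∃ j' ∈ s, c j' = c j := ⟨j, hj, rfl⟩
    rw [dif_pos hex] at h2
    show c j i = g j
    rw [h2]
    congr 1
    obtain ⟨hmem', heq⟩ := hex.choose_spec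
    exact hinj hmem' hj heq

open Classical in
private lemma shatCount_le {k n d : ℕ} (hn : 0 < n) (c : Fin n → (Fin k → Bool)) :
    shatteredCount d (Mc c) ≤
      ∑ e ∈ (Finset.univ.powersetCard d).filter (fun e => IsEdgeH k d e),
        ∏ v ∈ e, (Finset.univ.filter (fun j => c j = v)).card := by
  rw [shatteredCount]
  rw [Finset.card_eq_sum_card_fiberwise (f := fun s => s.image c)
    (t := (Finset.univ.powersetCard d).filter (fun e => IsEdgeH k d e))
    (fun s hsmem => by
      simp only [Finset.mem_coe, Finset.mem_filter, Finset.mem_powersetCard] at hsmem ⊢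
      obtain ⟨⟨_, hcard⟩, hshat⟩ := hsmem
      obtain ⟨hinj, hedge⟩ := (shat_iff c hcard).mp hshat
      exact ⟨⟨Finset.subset_univ _, hedge.1⟩, hedge⟩)]
  refine Finset.sum_le_sum fun e he => ?_
  rw [← Finset.card_pi e (fun v => Finset.univ.filter (fun j => c j = v))]
  set src := ((Finset.univ.powersetCard d).filter fun s => ColsShattered (Mc c) s).filter
      (fun s => s.image c = e) with hsrc
  have hkey : ∀ t ∈ src, ∀ v ∈ e, ∃ j ∈ t, c j = v := by
    intro t ht v hv
    simp only [hsrc, Finset.mem_filter] at ht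
    rw [← ht.2] at hv
    obtain ⟨j, hj, hcj⟩ := Finset.mem_image.mp hv
    exact ⟨j, hj, hcj⟩
  refine Finset.card_le_card_of_injOn
    (fun t => fun v hv => if h : ∃ j ∈ t, c j = v then h.choose else ⟨0, hn⟩) ?_ ?_
  · intro t ht
    rw [Finset.mem_coe, Finset.mem_pi]
    intro v hv
    dsimp only
    rw [dif_pos (hkey t ht v hv)]
    obtain ⟨hj, hcj⟩ := (hkey t ht v hv).choose_spec
    simp [hcj]
  · have hrec : ∀ t ∈ src, t = e.attach.image (fun a =>
        if h : ∃ j ∈ t, c j = a.1 then h.choose else ⟨0, hn⟩) := by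
      intro t ht
      have htmem := ht
      simp only [hsrc, Finset.mem_filter, Finset.mem_powersetCard] at htmem
      obtain ⟨⟨⟨_, hcard⟩, hshat⟩, himg⟩ := htmem
      have hsub : e.attach.image (fun a =>
          if h : ∃ j ∈ t, c j = a.1 then h.choose else ⟨0, hn⟩) ⊆ t := by
        intro j hj
        obtain ⟨a, _, ha⟩ := Finset.mem_image.mp hj
        rw [dif_pos (hkey t ht a.1 a.2)] at ha
        rw [← ha]
        exact ((hkey t ht a.1 a.2).choose_spec).1
      have hinjmap : Set.InjOn (fun a : {v // v ∈ e} =>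
          if h : ∃ j ∈ t, c j = a.1 then h.choose else ⟨0, hn⟩) ↑e.attach := by
        intro a _ b _ hab
        simp only [dif_pos (hkey t ht a.1 a.2), dif_pos (hkey t ht b.1 b.2)] at hab
        have ha := ((hkey t ht a.1 a.2).choose_spec).2
        have hb := ((hkey t ht b.1 b.2).choose_spec).2
        rw [hab] at ha
        exact Subtype.ext (ha.symm.trans hb)
      have hcardimg : (e.attach.image (fun a =>
          if h : ∃ j ∈ t, c j = a.1 then h.choose else ⟨0, hn⟩)).card = t.card := by
        rw [Finset.card_image_of_injOn hinjmap, Finset.card_attach, hcard,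
          ← himg, Finset.card_image_of_injOn ((shat_iff c hcard).mp hshat).1]
        exact hcard
      exact (Finset.eq_of_subset_of_card_le hsub hcardimg.ge).symm
    intro t1 ht1 t2 ht2 hF
    rw [hrec t1 ht1, hrec t2 ht2]
    exact Finset.image_congr (fun a _ => congrFun (congrFun hF a.1) a.2)

open Classical in
private lemma count_bij {n k d : ℕ} {s : Finset (Fin n)} {e : Finset (Fin k → Bool)}
    (hs : s.card = d) (he : e.card = d) (hE : IsEdgeH k d e) (v₀ : Fin k → Bool) :
    ((Finset.univ : Finset (Fin n → (Fin k → Bool))).filter (fun π =>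
      (Set.InjOn π ↑s ∧ IsEdgeH k d (s.image π) ∧ ∀ j ∉ s, π j = v₀) ∧ s.image π = e)).card
      = d.factorial := by
  have hcard : ((Finset.univ : Finset (Fin n → (Fin k → Bool))).filter (fun π =>
      (Set.InjOn π ↑s ∧ IsEdgeH k d (s.image π) ∧ ∀ j ∉ s, π j = v₀) ∧ s.image π = e)).card
      = (Finset.univ : Finset ({j // j ∈ s} ↪ {v // v ∈ e})).card := by
    refine Finset.card_bij' (i := fun π hπ =>
        ⟨fun a => ⟨π a.1, by
          obtain ⟨⟨hinj, _, _⟩, himg⟩ := (Finset.mem_filter.mp hπ).2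
          exact himg ▸ Finset.mem_image_of_mem π a.2⟩, by
          intro a b hab
          obtain ⟨⟨hinj, _, _⟩, himg⟩ := (Finset.mem_filter.mp hπ).2
          exact Subtype.ext (hinj a.2 b.2 (congrArg Subtype.val hab))⟩)
      (j := fun F _ => fun j => if h : j ∈ s then (F ⟨j, h⟩).1 else v₀)
      (fun _ _ => Finset.mem_univ _) ?_ ?_ ?_
    · intro F _
      set π : Fin n → (Fin k → Bool) := fun j => if h : j ∈ s then (F ⟨j, h⟩).1 else v₀ with hπ
      have hinj : Set.InjOn π ↑s := by
        intro a ha b hb hab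
        simp only [hπ, dif_pos (Finset.mem_coe.mp ha), dif_pos (Finset.mem_coe.mp hb)] at hab
        exact congrArg Subtype.val (F.injective (Subtype.ext hab))
      have himg : s.image π = e := by
        apply Finset.eq_of_subset_of_card_le
        · intro v hv
          obtain ⟨j, hj, hjv⟩ := Finset.mem_image.mp hv
          simp only [hπ, dif_pos hj] at hjv
          exact hjv ▸ (F ⟨j, hj⟩).2
        · rw [he, Finset.card_image_of_injOn hinj, hs]
      simp only [Finset.mem_filter, Finset.mem_univ, true_and]
      exact ⟨⟨hinj, by rw [himg]; exact hE, fun j hj => dif_neg hj⟩, himg⟩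
    · intro π hπ
      funext j
      by_cases h : j ∈ s
      · simp only [dif_pos h]; rfl
      · simp only [dif_neg h]
        exact (((Finset.mem_filter.mp hπ).2.1.2.2) j h).symm
    · intro F hF
      apply DFunLike.ext
      intro a
      apply Subtype.ext
      show (if h : (a : Fin n) ∈ s then ((F ⟨↑a, h⟩ : {v // v ∈ e}) : Fin k → Bool) else v₀)
        = ↑(F a)
      rw [dif_pos a.2]
  rw [hcard, Finset.card_univ, Fintype.card_embedding_eq, Fintype.card_coe,
    Fintype.card_coe, hs, he, Nat.descFactorial_self]

open Classical in
private lemma key_lower {k n d : ℕ} (x : (Fin k → Bool) → ℝ) (hx0 : ∀ v, 0 ≤ x v)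
    (hx1 : ∑ v, x v = 1) {s : Finset (Fin n)} (hs : s.card = d) :
    (d.factorial : ℝ) * lagPoly k d x ≤
      ∑ c : Fin n → (Fin k → Bool), (∏ j, x (c j)) *
        (if ColsShattered (Mc c) s then 1 else 0) := by
  set v₀ : Fin k → Bool := fun _ => false with hv₀
  set Pall : Finset (Fin n → (Fin k → Bool)) := Finset.univ.filter (fun π =>
      Set.InjOn π ↑s ∧ IsEdgeH k d (s.image π) ∧ ∀ j ∉ s, π j = v₀) with hPall
  set C : (Fin n → (Fin k → Bool)) → Finset (Fin n → (Fin k → Bool)) :=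
      fun π => Fintype.piFinset (fun j => if j ∈ s then {π j} else Finset.univ) with hC
  have hmemC : ∀ π c, c ∈ C π ↔ ∀ j ∈ s, c j = π j := by
    intro π c
    rw [hC, Fintype.mem_piFinset]
    constructor
    · intro h j hj
      have := h j
      rwa [if_pos hj, Finset.mem_singleton] at this
    · intro h j
      by_cases hj : j ∈ s
      · rw [if_pos hj, Finset.mem_singleton]; exact h j hj
      · rw [if_neg hj]; exact Finset.mem_univ _
  have hRHS : ∑ c : Fin n → (Fin k → Bool), (∏ j, x (c j)) *
        (if ColsShattered (Mc c) s then 1 else 0)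
      = ∑ c ∈ Finset.univ.filter (fun c => ColsShattered (Mc c) s), ∏ j, x (c j) := by
    rw [Finset.sum_filter]
    apply Finset.sum_congr rfl
    intro c _
    by_cases h : ColsShattered (Mc c) s <;> simp [h]
  rw [hRHS]
  have hsub : Pall.biUnion C ⊆ Finset.univ.filter (fun c => ColsShattered (Mc c) s) := by
    intro c hc
    obtain ⟨π, hπ, hcπ⟩ := Finset.mem_biUnion.mp hc
    rw [hPall, Finset.mem_filter] at hπ
    obtain ⟨_, hinj, hedge, _⟩ := hπ
    have hagree := (hmemC π c).mp hcπ
    rw [Finset.mem_filter]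
    refine ⟨Finset.mem_univ _, (shat_iff c hs).mpr ⟨?_, ?_⟩⟩
    · intro a ha b hb hab
      rw [hagree a (Finset.mem_coe.mp ha), hagree b (Finset.mem_coe.mp hb)] at hab
      exact hinj ha hb hab
    · rwa [Finset.image_congr (fun j hj => hagree j (Finset.mem_coe.mp hj))]
  have hdisj : (↑Pall : Set (Fin n → (Fin k → Bool))).PairwiseDisjoint C := by
    intro π hπ π' hπ' hne
    show Disjoint (C π) (C π')
    rw [Finset.disjoint_left]
    intro c hc hc'
    apply hne
    funext j
    by_cases hj : j ∈ s
    · rw [← (hmemC π c).mp hc j hj, (hmemC π' c).mp hc' j hj]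
    · rw [Finset.mem_coe, hPall, Finset.mem_filter] at hπ hπ'
      rw [hπ.2.2.2 j hj, hπ'.2.2.2 j hj]
  calc (d.factorial : ℝ) * lagPoly k d x
      = ∑ c ∈ Pall.biUnion C, ∏ j, x (c j) := ?_
    _ ≤ ∑ c ∈ Finset.univ.filter (fun c => ColsShattered (Mc c) s), ∏ j, x (c j) :=
        Finset.sum_le_sum_of_subset_of_nonneg hsub
          (fun c _ _ => Finset.prod_nonneg fun j _ => hx0 _)
  rw [Finset.sum_biUnion hdisj]
  have hcell : ∀ π ∈ Pall, ∑ c ∈ C π, ∏ j, x (c j) = ∏ v ∈ s.image π, x v := by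
    intro π hπ
    rw [hPall, Finset.mem_filter] at hπ
    have h1 : ∑ c ∈ C π, ∏ j, x (c j)
        = ∏ j, ∑ v ∈ (if j ∈ s then {π j} else Finset.univ), x v := by
      rw [Finset.prod_univ_sum]
    rw [h1]
    have h2 : ∀ j : Fin n, (∑ v ∈ (if j ∈ s then {π j} else Finset.univ), x v)
        = if j ∈ s then x (π j) else 1 := by
      intro j
      by_cases hj : j ∈ s
      · rw [if_pos hj, if_pos hj, Finset.sum_singleton]
      · rw [if_neg hj, if_neg hj, hx1]
    rw [Finset.prod_congr rfl (fun j _ => h2 j), Finset.prod_ite_mem, Finset.univ_inter,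
      ← Finset.prod_image (fun a ha b hb hab => hπ.2.1 ha hb hab)]
  rw [Finset.sum_congr rfl hcell]
  have hmaps : ∀ π ∈ Pall, s.image π ∈
      (Finset.univ.powersetCard d).filter (fun e => IsEdgeH k d e) := by
    intro π hπ
    rw [hPall, Finset.mem_filter] at hπ
    rw [Finset.mem_filter, Finset.mem_powersetCard]
    exact ⟨⟨Finset.subset_univ _, by rw [Finset.card_image_of_injOn hπ.2.1, hs]⟩, hπ.2.2.1⟩
  rw [← Finset.sum_fiberwise_of_maps_to hmaps]
  rw [lagPoly, Finset.mul_sum]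
  apply Finset.sum_congr rfl
  intro e he
  have heprop := Finset.mem_filter.mp he
  have hecard : e.card = d := (Finset.mem_powersetCard.mp heprop.1).2
  have h3 : ∀ π ∈ Pall.filter (fun π => s.image π = e),
      ∏ v ∈ s.image π, x v = ∏ v ∈ e, x v := by
    intro π hπ
    rw [(Finset.mem_filter.mp hπ).2]
  rw [Finset.sum_congr rfl h3, Finset.sum_const]
  have h4 : Pall.filter (fun π => s.image π = e)
      = (Finset.univ : Finset (Fin n → (Fin k → Bool))).filter (fun π =>
        (Set.InjOn π ↑s ∧ IsEdgeH k d (s.image π) ∧ ∀ j ∉ s, π j = v₀) ∧ s.image π = e) := by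
    rw [hPall, Finset.filter_filter]
  rw [h4, count_bij hs hecard heprop.2 v₀, nsmul_eq_mul]

end Aux

open Classical in
private lemma lag_mem_le {k d : ℕ} (x : (Fin k → Bool) → ℝ) (hx0 : ∀ v, 0 ≤ x v)
    (hx1 : ∑ v, x v = 1) : lagPoly k d x ≤ lagH k d := by
  apply le_csSup
  · refine ⟨(((Finset.univ.powersetCard d).filter (fun e => IsEdgeH k d e)).card : ℝ), ?_⟩
    rintro y ⟨z, hz0, hz1, rfl⟩
    rw [lagPoly]
    calc ∑ e ∈ (Finset.univ.powersetCard d).filter (fun e => IsEdgeH k d e), ∏ v ∈ e, z v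
        ≤ ∑ _e ∈ (Finset.univ.powersetCard d).filter (fun e => IsEdgeH k d e), (1:ℝ) :=
          Finset.sum_le_sum (fun e _ =>
            Finset.prod_le_one (fun v _ => hz0 v)
              (fun v _ => (Finset.single_le_sum (fun w _ => hz0 w)
                (Finset.mem_univ v)).trans hz1.le))
      _ = _ := by rw [Finset.sum_const, nsmul_eq_mul, mul_one]
  · exact ⟨x, hx0, hx1, rfl⟩


theorem stmt3 (n k d : ℕ) (hd : 1 ≤ d) (hn : d ≤ n) (hk : 2 ^ d ≤ k) :
    (d.factorial : ℝ) * lagH k d * (n.choose d) ≤ (fMat n k d : ℝ) ∧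
      (fMat n k d : ℝ) ≤ lagH k d * (n : ℝ) ^ d := by
  classical
  have hn0 : 0 < n := lt_of_lt_of_le hd hn
  constructor
  · -- lower bound
    have lower : ∀ x : (Fin k → Bool) → ℝ, (∀ v, 0 ≤ x v) → (∑ v, x v = 1) →
        (d.factorial : ℝ) * lagPoly k d x * (n.choose d) ≤ (fMat n k d : ℝ) := by
      intro x hx0 hx1
      have hW : ∑ c : Fin n → (Fin k → Bool), ∏ j, x (c j) = 1 := by
        have h := Finset.prod_univ_sum
          (fun _ : Fin n => (Finset.univ : Finset (Fin k → Bool))) (fun _ v => x v)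
        rw [Fintype.piFinset_univ] at h
        rw [← h, hx1]
        simp
      have hsc : ∀ c : Fin n → (Fin k → Bool),
          (shatteredCount d (Mc c) : ℝ) = ∑ s ∈ Finset.univ.powersetCard d,
            (if ColsShattered (Mc c) s then (1:ℝ) else 0) := by
        intro c
        rw [shatteredCount, Finset.card_filter]
        push_cast
        rfl
      calc (d.factorial : ℝ) * lagPoly k d x * (n.choose d)
          = ∑ _s ∈ (Finset.univ : Finset (Fin n)).powersetCard d,
              (d.factorial : ℝ) * lagPoly k d x := by
            rw [Finset.sum_const, Finset.card_powersetCard, Finset.card_univ,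
              Fintype.card_fin, nsmul_eq_mul]
            ring
        _ ≤ ∑ s ∈ (Finset.univ : Finset (Fin n)).powersetCard d,
              ∑ c : Fin n → (Fin k → Bool), (∏ j, x (c j)) *
                (if ColsShattered (Mc c) s then 1 else 0) :=
            Finset.sum_le_sum (fun s hs =>
              key_lower x hx0 hx1 (Finset.mem_powersetCard.mp hs).2)
        _ = ∑ c : Fin n → (Fin k → Bool), (∏ j, x (c j)) *
              (shatteredCount d (Mc c) : ℝ) := by
            rw [Finset.sum_comm]
            apply Finset.sum_congr rfl
            intro c _
            rw [hsc c, Finset.mul_sum]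
        _ ≤ ∑ c : Fin n → (Fin k → Bool), (∏ j, x (c j)) * (fMat n k d : ℝ) := by
            apply Finset.sum_le_sum
            intro c _
            apply mul_le_mul_of_nonneg_left _ (Finset.prod_nonneg fun j _ => hx0 _)
            have hle : shatteredCount d (Mc c) ≤ fMat n k d :=
              Finset.le_sup (f := fun M => shatteredCount d M) (Finset.mem_univ (Mc c))
            exact_mod_cast hle
        _ = (fMat n k d : ℝ) := by rw [← Finset.sum_mul, hW, one_mul]
    have hCpos : (0:ℝ) < (d.factorial : ℝ) * (n.choose d) := by
      have := Nat.choose_pos hn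
      positivity
    have hsup : lagH k d ≤ (fMat n k d : ℝ) / ((d.factorial : ℝ) * (n.choose d)) := by
      apply Real.sSup_le
      · rintro y ⟨x, hx0, hx1, rfl⟩
        rw [le_div_iff₀ hCpos]
        calc lagPoly k d x * ((d.factorial : ℝ) * (n.choose d))
            = (d.factorial : ℝ) * lagPoly k d x * (n.choose d) := by ring
          _ ≤ (fMat n k d : ℝ) := lower x hx0 hx1
      · positivity
    rw [le_div_iff₀ hCpos] at hsup
    calc (d.factorial : ℝ) * lagH k d * (n.choose d)
        = lagH k d * ((d.factorial : ℝ) * (n.choose d)) := by ring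
      _ ≤ (fMat n k d : ℝ) := hsup
  · -- upper bound
    obtain ⟨M, _, hM⟩ := Finset.exists_mem_eq_sup (Finset.univ) Finset.univ_nonempty
      (fun M : Fin k → Fin n → Bool => shatteredCount d M)
    set c : Fin n → (Fin k → Bool) := fun j i => M i j with hc
    have hMc : Mc c = M := rfl
    set cnt : (Fin k → Bool) → ℕ := fun v => (Finset.univ.filter (fun j => c j = v)).card
      with hcnt
    have hsumcnt : ∑ v, cnt v = n := by
      have h := Finset.card_eq_sum_card_fiberwise (f := c) (s := Finset.univ)
        (t := Finset.univ) (fun j _ => Finset.mem_univ _)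
      simpa using h.symm
    set x : (Fin k → Bool) → ℝ := fun v => (cnt v : ℝ) / n with hx
    have hx0 : ∀ v, 0 ≤ x v := fun v => by positivity
    have hx1 : ∑ v, x v = 1 := by
      rw [hx, ← Finset.sum_div]
      rw [show (∑ v, (cnt v : ℝ)) = (n:ℝ) by exact_mod_cast hsumcnt]
      field_simp
    have hkey := shatCount_le (d := d) hn0 c
    have hcast : (shatteredCount d (Mc c) : ℝ) ≤
        ∑ e ∈ (Finset.univ.powersetCard d).filter (fun e => IsEdgeH k d e),
          ∏ v ∈ e, (cnt v : ℝ) := by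
      exact_mod_cast hkey
    have hprod : ∀ e ∈ (Finset.univ.powersetCard d).filter (fun e => IsEdgeH k d e),
        (∏ v ∈ e, (cnt v : ℝ)) = (n:ℝ)^d * ∏ v ∈ e, x v := by
      intro e he
      have hecard := (Finset.mem_powersetCard.mp (Finset.mem_filter.mp he).1).2
      rw [← hecard, ← Finset.prod_const, ← Finset.prod_mul_distrib]
      apply Finset.prod_congr rfl
      intro v _
      rw [hx]
      field_simp
    calc (fMat n k d : ℝ) = (shatteredCount d (Mc c) : ℝ) := by rw [hMc]; exact_mod_cast hM
      _ ≤ ∑ e ∈ (Finset.univ.powersetCard d).filter (fun e => IsEdgeH k d e),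
            ∏ v ∈ e, (cnt v : ℝ) := hcast
      _ = (n:ℝ)^d * lagPoly k d x := by
          rw [Finset.sum_congr rfl hprod, ← Finset.mul_sum, lagPoly]
      _ ≤ (n:ℝ)^d * lagH k d := by
          apply mul_le_mul_of_nonneg_left (lag_mem_le x hx0 hx1) (by positivity)
      _ = lagH k d * (n:ℝ)^d := by ring
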